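/- Subset-sum reduction structure: Given a multiset of N nonnegative integers and a target T, there exists an expression using each number exactly once with only addition and multiplication-by-zero that evaluates to T if and only if some subset of the numbers sums to T, provided 0 can be produced by multiplying any unused numbers by a zero element. Formally: if one of the N numbers is 0, then T is achievable via operations {+, ×} with the restriction that × is only applied when one operand is 0, iff some subset of the nonzero numbers sums to T. -/
import Mathlib


/-- Expressions over natural numbers built from leaves via `+` and `×`. -/
inductive Expr where
  | leaf : ℕ → Expr
  | add : Expr → Expr → Expr
  | mul : Expr → Expr → Expr

/-- The value of an expression. -/
def Expr.eval : Expr → ℕ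
  | .leaf n => n
  | .add l r => l.eval + r.eval
  | .mul l r => l.eval * r.eval

/-- The multiset of numbers at the leaves of an expression. -/
def Expr.leaves : Expr → Multiset ℕ
  | .leaf n => {n}
  | .add l r => l.leaves + r.leaves
  | .mul l r => l.leaves + r.leaves

/-- Every multiplication node has at least one operand evaluating to `0`
(multiplication is only used to discard values by multiplying with zero). -/
def Expr.zeroMulOnly : Expr → Prop
  | .leaf _ => True
  | .add l r => l.zeroMulOnly ∧ r.zeroMulOnly
  | .mul l r => l.zeroMulOnly ∧ r.zeroMulOnly ∧ (l.eval = 0 ∨ r.eval = 0)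

lemma fwd (e : Expr) (hz : e.zeroMulOnly) :
    ∃ s ≤ e.leaves.filter (fun x => x ≠ 0), s.sum = e.eval := by
  induction e with
  | leaf n =>
    by_cases hn : n = 0
    · exact ⟨0, Multiset.zero_le _, by simp [Expr.eval, hn]⟩
    · refine ⟨{n}, ?_, by simp [Expr.eval]⟩
      simp [Expr.leaves, Multiset.filter_singleton, hn]
  | add l r ihl ihr =>
    obtain ⟨s1, hs1, he1⟩ := ihl hz.1
    obtain ⟨s2, hs2, he2⟩ := ihr hz.2
    refine ⟨s1 + s2, ?_, by simp [Expr.eval, he1, he2]⟩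
    simp only [Expr.leaves, Multiset.filter_add]
    exact add_le_add hs1 hs2
  | mul l r ihl ihr =>
    refine ⟨0, Multiset.zero_le _, ?_⟩
    rcases hz.2.2 with h | h <;> simp [Expr.eval, h]

lemma zeroE (M : Multiset ℕ) :
    ∃ e : Expr, e.leaves = 0 ::ₘ M ∧ e.zeroMulOnly ∧ e.eval = 0 := by
  induction M using Multiset.induction with
  | empty => exact ⟨.leaf 0, rfl, trivial, rfl⟩
  | cons a M ih =>
    obtain ⟨e, hl, hz, he⟩ := ih
    refine ⟨.mul e (.leaf a), ?_, ⟨hz, trivial, Or.inl he⟩, by simp [Expr.eval, he]⟩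
    simp only [Expr.leaves, hl]
    rw [← Multiset.singleton_add, ← Multiset.singleton_add, ← Multiset.singleton_add]
    abel

lemma sumE (s M : Multiset ℕ) :
    ∃ e : Expr, e.leaves = s + (0 ::ₘ M) ∧ e.zeroMulOnly ∧ e.eval = s.sum := by
  induction s using Multiset.induction with
  | empty =>
    obtain ⟨e, hl, hz, he⟩ := zeroE M
    exact ⟨e, by simp [hl], hz, by simp [he]⟩
  | cons a s ih =>
    obtain ⟨e, hl, hz, he⟩ := ih
    refine ⟨.add (.leaf a) e, ?_, ⟨trivial, hz⟩, by simp [Expr.eval, he]⟩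
    simp only [Expr.leaves, hl, Multiset.singleton_add, Multiset.cons_add]

/-- Subset-sum reduction structure: if one of the given numbers is `0`, then a
target `T` is achievable by an expression using each given number exactly once,
with operations `+` and `×` where `×` is only applied when one operand is `0`,
iff some subset of the nonzero given numbers sums to `T`. -/
theorem game24_subset_sum (S : Multiset ℕ) (h0 : (0 : ℕ) ∈ S) (T : ℕ) :
    (∃ e : Expr, e.leaves = S ∧ e.zeroMulOnly ∧ e.eval = T) ↔
      ∃ s ≤ S.filter (fun x => x ≠ 0), s.sum = T := by
  constructor
  · rintro ⟨e, hl, hz, he⟩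
    obtain ⟨s, hs, hsum⟩ := fwd e hz
    exact ⟨s, hl ▸ hs, hsum.trans he⟩
  · rintro ⟨s, hs, hsum⟩
    have hsS : s ≤ S := hs.trans (Multiset.filter_le _ S)
    have hcount : Multiset.count 0 s = 0 := by
      have := Multiset.count_le_of_le 0 hs
      simpa using this
    have h0mem : (0 : ℕ) ∈ S - s := by
      rw [← Multiset.count_pos, Multiset.count_sub, hcount]
      simpa [Multiset.count_pos] using h0
    obtain ⟨e, hl, hz, he⟩ := sumE s ((S - s).erase 0)
    refine ⟨e, ?_, hz, he.trans hsum⟩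
    rw [hl, Multiset.cons_erase h0mem, add_comm, tsub_add_cancel_of_le hsS]
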